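/- The optimal value function u satisfies limsup_{t→∞} u(t)/√t ≤ √2. -/

import Mathlib

/-- The operator `J` from the paper: `(Jf)(t) = ∫₀¹ (f(t(1−x)) + 1 − f(t))⁺ dx`. -/
noncomputable def Jop (f : ℝ → ℝ) (t : ℝ) : ℝ :=
  ∫ x in (0 : ℝ)..1, max (f (t * (1 - x)) + 1 - f t) 0

open Set Filter intervalIntegral in
/-- The optimal value function `u` (the C¹ solution of `u′ = Ju`, `u(0) = 0`)
satisfies `limsup_{t→∞} u(t)/√t ≤ √2`, i.e. for every `ε > 0`, eventually
`u(t)/√t ≤ √2 + ε`. -/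
theorem statement2 (u u' : ℝ → ℝ)
    (hderiv : ∀ t ∈ Set.Ici (0 : ℝ), HasDerivWithinAt u (u' t) (Set.Ici (0 : ℝ)) t)
    (hcont : ContinuousOn u' (Set.Ici (0 : ℝ)))
    (hu0 : u 0 = 0)
    (heq : ∀ t ∈ Set.Ici (0 : ℝ), u' t = Jop u t) :
    ∀ ε > (0 : ℝ), ∀ᶠ t in Filter.atTop, u t / Real.sqrt t ≤ Real.sqrt 2 + ε := by
  have hucont : ContinuousOn u (Set.Ici (0 : ℝ)) :=
    fun t ht => (hderiv t ht).continuousWithinAt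
  -- continuity of the integrand of `Jop u t` for `t ≥ 0`
  have hicont : ∀ t : ℝ, 0 ≤ t →
      ContinuousOn (fun x : ℝ => max (u (t * (1 - x)) + 1 - u t) 0) (Set.uIcc (0:ℝ) 1) := by
    intro t ht
    have h1 : ContinuousOn (fun x : ℝ => u (t * (1 - x))) (Set.uIcc (0:ℝ) 1) := by
      apply hucont.comp (by fun_prop)
      intro x hx
      rw [Set.uIcc_of_le (zero_le_one)] at hx
      exact mul_nonneg ht (by linarith [hx.1, hx.2])
    exact ((h1.add continuousOn_const).sub continuousOn_const).sup continuousOn_const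
  have hu'nonneg : ∀ t ∈ Set.Ici (0:ℝ), 0 ≤ u' t := by
    intro t ht
    rw [heq t ht]
    exact intervalIntegral.integral_nonneg zero_le_one (fun x _ => le_max_right _ _)
  have humono : MonotoneOn u (Set.Ici (0:ℝ)) := by
    apply monotoneOn_of_hasDerivWithinAt_nonneg (convex_Ici 0) hucont
    · exact fun x hx => ((hderiv x (interior_subset hx)).mono interior_subset)
    · exact fun x hx => hu'nonneg x (interior_subset hx)
  -- `u' ≤ 1`
  have hu'le1 : ∀ t ∈ Set.Ici (0:ℝ), u' t ≤ 1 := by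
    intro t ht
    have ht' : (0:ℝ) ≤ t := ht
    rw [heq t ht]
    have h1 : Jop u t ≤ ∫ _x in (0:ℝ)..1, (1:ℝ) := by
      apply intervalIntegral.integral_mono_on zero_le_one
        ((hicont t ht').intervalIntegrable) intervalIntegrable_const
      intro x hx
      apply max_le _ zero_le_one
      have h2 : u (t * (1 - x)) ≤ u t := by
        apply humono (Set.mem_Ici.2 (mul_nonneg ht' (by linarith [hx.2]))) (Set.mem_Ici.2 ht')
        nlinarith [hx.1, mul_nonneg ht' hx.1]
      linarith
    simpa using h1
  -- `u t ≤ t` on `[0, ∞)`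
  have hut : ∀ t ∈ Set.Ici (0:ℝ), u t ≤ t := by
    have hg : MonotoneOn (fun t : ℝ => t - u t) (Set.Ici (0:ℝ)) := by
      apply monotoneOn_of_hasDerivWithinAt_nonneg (convex_Ici 0)
        ((continuous_id.continuousOn).sub hucont) (f' := fun t => 1 - u' t)
      · intro x hx
        exact ((hasDerivWithinAt_id x _).sub (hderiv x (interior_subset hx))).mono interior_subset
      · intro x hx
        have := hu'le1 x (interior_subset hx)
        linarith
    intro t ht
    have := hg (Set.mem_Ici.2 le_rfl) ht ht
    simp only [hu0] at this
    linarith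
  set v : ℝ → ℝ := fun t => Real.sqrt (2*t - 1) + 1 with hv
  have hvcont : Continuous v := by fun_prop
  -- initial segment
  have hinit : ∀ t ∈ Set.Icc (0:ℝ) 2, u t < v t := by
    intro t ht
    have h1 : u t ≤ t := hut t ht.1
    have h2 : t < Real.sqrt (2*t - 1) + 1 := by
      rcases lt_or_ge t 1 with h | h
      · have := Real.sqrt_nonneg (2*t - 1); linarith
      · have h3 : t - 1 < Real.sqrt (2*t - 1) := by
          rw [Real.lt_sqrt (by linarith)]
          nlinarith [ht.2]
        linarith
    simpa [hv] using lt_of_le_of_lt h1 h2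
  -- main comparison: `u < v` on `[0, ∞)`
  have hcomp : ∀ t ∈ Set.Ici (0:ℝ), u t < v t := by
    by_contra hc
    push_neg at hc
    obtain ⟨t₀, ht₀, hvt₀⟩ := hc
    set A : Set ℝ := Set.Ici 2 ∩ {t | v t ≤ u t} with hA
    have hbdd : BddBelow A := ⟨2, fun x hx => hx.1⟩
    have h2t₀ : (2:ℝ) ≤ t₀ := by
      by_contra h
      push_neg at h
      exact absurd hvt₀ (not_le.2 (hinit t₀ ⟨ht₀, h.le⟩))
    have hne : A.Nonempty := ⟨t₀, h2t₀, hvt₀⟩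
    have hAclosed : IsClosed A := by
      have hcw : ContinuousOn (fun t => u t - v t) (Set.Ici (2:ℝ)) :=
        (hucont.mono (Set.Ici_subset_Ici.2 (by norm_num))).sub hvcont.continuousOn
      have h1 : IsClosed (Set.Ici (2:ℝ) ∩ (fun t => u t - v t) ⁻¹' Set.Ici 0) :=
        hcw.preimage_isClosed_of_isClosed isClosed_Ici isClosed_Ici
      have h2 : A = Set.Ici (2:ℝ) ∩ (fun t => u t - v t) ⁻¹' Set.Ici 0 := by
        ext x
        simp only [hA, Set.mem_inter_iff, Set.mem_Ici, Set.mem_setOf_eq, Set.mem_preimage,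
          sub_nonneg]
      rw [h2]; exact h1
    set τ := sInf A with hτ
    have hτA : τ ∈ A := hAclosed.csInf_mem hne hbdd
    have hτ2 : (2:ℝ) ≤ τ := hτA.1
    have hτvu : v τ ≤ u τ := hτA.2
    have hτpos : (0:ℝ) < τ := by linarith
    have hlt : ∀ s, 0 ≤ s → s < τ → u s < v s := by
      intro s hs hsτ
      rcases le_or_gt s 2 with h | h
      · exact hinit s ⟨hs, h⟩
      · by_contra hns
        push_neg at hns
        exact absurd (csInf_le hbdd ⟨le_of_lt h, hns⟩) (not_le.2 hsτ)
    have hkey : ∀ s, 0 ≤ s → s ≤ τ → u s - v s ≤ u τ - v τ := by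
      intro s hs hsτ
      rcases eq_or_lt_of_le hsτ with rfl | h
      · exact le_rfl
      · have h1 := hlt s hs h
        linarith
    set a := Real.sqrt (2*τ - 1) with haa
    have ha2 : a^2 = 2*τ - 1 := Real.sq_sqrt (by linarith)
    have hapos : 0 < a := Real.sqrt_pos.2 (by linarith)
    have haτ : a ≤ τ := by nlinarith
    -- continuity of the integrand of `Jop v τ`
    have hvicont : ContinuousOn (fun x : ℝ => max (v (τ * (1 - x)) + 1 - v τ) 0)
        (Set.uIcc (0:ℝ) 1) := by
      exact (((hvcont.comp (by fun_prop : Continuous fun x : ℝ => τ * (1 - x))).continuousOn.add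
        continuousOn_const).sub continuousOn_const).sup continuousOn_const
    have hlincont : ∀ c d : ℝ, ContinuousOn (fun x : ℝ => max (1 - τ*x/a) 0) (Set.uIcc c d) := by
      intro c d
      exact ((continuousOn_const.sub (by fun_prop)).sup continuousOn_const)
    -- `Jop u τ ≤ Jop v τ`
    have hJuv : Jop u τ ≤ Jop v τ := by
      apply intervalIntegral.integral_mono_on zero_le_one
        ((hicont τ hτpos.le).intervalIntegrable) (hvicont.intervalIntegrable)
      intro x hx
      apply max_le_max _ le_rfl
      have h1 := hkey (τ * (1 - x)) (mul_nonneg hτpos.le (by linarith [hx.2]))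
        (by nlinarith [hx.1, mul_nonneg hτpos.le hx.1])
      linarith
    -- `Jop v τ ≤ ∫ (1 - τx/a)⁺`
    have hJv : Jop v τ ≤ ∫ x in (0:ℝ)..1, max (1 - τ*x/a) 0 := by
      apply intervalIntegral.integral_mono_on zero_le_one
        (hvicont.intervalIntegrable) ((hlincont 0 1).intervalIntegrable)
      intro x hx
      apply max_le_max _ le_rfl
      have hmul : Real.sqrt (2*(τ*(1-x)) - 1) * (2*a) ≤ 2*a^2 - 2*τ*x := by
        have hτx : τ*x ≤ τ := by nlinarith [hx.2, hτpos.le]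
        rcases le_or_gt (2*(τ*(1-x)) - 1) 0 with h | h
        · rw [Real.sqrt_eq_zero'.2 h, zero_mul]
          linarith [ha2]
        · nlinarith [Real.sq_sqrt h.le, Real.sqrt_nonneg (2*(τ*(1-x)) - 1),
            sq_nonneg (Real.sqrt (2*(τ*(1-x)) - 1) - a)]
      have hfract : a - τ*x/a = (2*a^2 - 2*τ*x)/(2*a) := by
        field_simp
      have hsq : Real.sqrt (2*(τ*(1-x)) - 1) ≤ a - τ*x/a := by
        rw [hfract, le_div_iff₀ (by positivity)]
        linarith
      have e0 : v (τ*(1-x)) + 1 - v τ = Real.sqrt (2*(τ*(1-x)) - 1) - a + 1 := by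
        simp only [hv, ← haa]
        ring
      rw [e0]
      linarith
    -- compute the linear integral
    have hcalc : (∫ x in (0:ℝ)..1, max (1 - τ*x/a) 0) = a/(2*τ) := by
      set b := a/τ with hb
      have hb0 : 0 < b := div_pos hapos hτpos
      have hb1 : b ≤ 1 := (div_le_one hτpos).2 haτ
      have hτb : τ * b = a := by rw [hb]; field_simp
      have hi1 : IntervalIntegrable (fun x : ℝ => max (1 - τ*x/a) 0) MeasureTheory.volume 0 b :=
        (hlincont 0 b).intervalIntegrable
      have hi2 : IntervalIntegrable (fun x : ℝ => max (1 - τ*x/a) 0) MeasureTheory.volume b 1 :=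
        (hlincont b 1).intervalIntegrable
      rw [← intervalIntegral.integral_add_adjacent_intervals hi1 hi2]
      have h1 : (∫ x in (0:ℝ)..b, max (1 - τ*x/a) 0) = ∫ x in (0:ℝ)..b, (1 - (τ/a)*x) := by
        apply intervalIntegral.integral_congr
        intro x hx
        rw [Set.uIcc_of_le hb0.le] at hx
        have hxb : τ*x/a ≤ 1 := by
          rw [div_le_one hapos]
          calc τ*x ≤ τ*b := by nlinarith [hx.2, hτpos.le]
          _ = a := hτb
        show max (1 - τ*x/a) 0 = 1 - (τ/a)*x
        rw [max_eq_left (by linarith)]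
        ring
      have h2 : (∫ x in b..1, max (1 - τ*x/a) 0) = ∫ _x in b..1, (0:ℝ) := by
        apply intervalIntegral.integral_congr
        intro x hx
        rw [Set.uIcc_of_le hb1] at hx
        have hxb : 1 ≤ τ*x/a := by
          rw [le_div_iff₀ hapos, one_mul, ← hτb]
          nlinarith [hx.1, hτpos.le]
        show max (1 - τ*x/a) 0 = 0
        rw [max_eq_right (by linarith)]
      rw [h1, h2]
      rw [intervalIntegral.integral_sub intervalIntegrable_const
        (IntervalIntegrable.const_mul intervalIntegrable_id _)]
      rw [intervalIntegral.integral_const_mul, integral_id, intervalIntegral.integral_const]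
      rw [intervalIntegral.integral_zero, add_zero, hb]
      field_simp
      ring_nf
      rw [mul_inv_cancel_right₀ hτpos.ne']
      ring
    have hfin : a/(2*τ) < 1/a := by
      rw [div_lt_div_iff₀ (by linarith) hapos]
      nlinarith
    -- derivative of v at τ
    have hv' : HasDerivAt v (1/a) τ := by
      have h1 : HasDerivAt (fun t : ℝ => 2*t - 1) 2 τ := by
        simpa using ((hasDerivAt_id τ).const_mul 2).sub_const 1
      have h2 := (Real.hasDerivAt_sqrt (show 2*τ - 1 ≠ 0 by linarith)).comp τ h1
      have h3 := h2.add_const 1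
      have he : 1 / (2 * Real.sqrt (2*τ - 1)) * 2 = 1/a := by
        rw [← haa]
        field_simp
      rw [he] at h3
      exact h3
    have hw : HasDerivWithinAt (fun t => u t - v t) (u' τ - 1/a) (Set.Ici 0) τ :=
      (hderiv τ hτpos.le).sub hv'.hasDerivWithinAt
    have hdlt : u' τ - 1/a < 0 := by
      rw [heq τ hτpos.le]
      have := hJuv.trans (hJv.trans_eq hcalc)
      linarith
    have hdge : 0 ≤ u' τ - 1/a := by
      have h1 : HasDerivWithinAt (fun t => u t - v t) (u' τ - 1/a) (Set.Ioo 0 τ) τ :=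
        hw.mono (fun x hx => hx.1.le)
      have h2 := hasDerivWithinAt_iff_tendsto_slope.mp h1
      rw [Set.diff_singleton_eq_self (by simp)] at h2
      have hnb : (nhdsWithin τ (Set.Ioo 0 τ)).NeBot := by
        rw [nhdsWithin_Ioo_eq_nhdsLT hτpos]
        infer_instance
      apply ge_of_tendsto h2
      filter_upwards [self_mem_nhdsWithin] with s hs
      rw [slope_def_field]
      show 0 ≤ ((u s - v s) - (u τ - v τ)) / (s - τ)
      have h3 : u s - v s < 0 := sub_neg.2 (hlt s hs.1.le hs.2)
      have h4 : 0 ≤ u τ - v τ := sub_nonneg.2 hτvu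
      rw [← neg_div_neg_eq]
      apply div_nonneg
      · linarith
      · linarith [hs.2]
    linarith
  -- conclusion
  intro ε hε
  rw [Filter.eventually_atTop]
  refine ⟨max 1 (ε⁻¹^2), fun t ht => ?_⟩
  have ht1 : (1:ℝ) ≤ t := le_trans (le_max_left _ _) ht
  have ht2 : ε⁻¹^2 ≤ t := le_trans (le_max_right _ _) ht
  have hst : 0 < Real.sqrt t := Real.sqrt_pos.2 (by linarith)
  rw [div_le_iff₀ hst]
  have h1 : u t < Real.sqrt (2*t - 1) + 1 := hcomp t (Set.mem_Ici.2 (by linarith))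
  have h2 : Real.sqrt (2*t - 1) ≤ Real.sqrt (2*t) := Real.sqrt_le_sqrt (by linarith)
  have h3 : Real.sqrt (2*t) = Real.sqrt 2 * Real.sqrt t := Real.sqrt_mul (by norm_num) t
  have h4 : (1:ℝ) ≤ ε * Real.sqrt t := by
    have h5 : ε⁻¹ ≤ Real.sqrt t := by
      rw [show ε⁻¹ = Real.sqrt (ε⁻¹^2) from (Real.sqrt_sq (by positivity)).symm]
      exact Real.sqrt_le_sqrt ht2
    have h6 := mul_le_mul_of_nonneg_left h5 hε.le
    rw [mul_inv_cancel₀ (ne_of_gt hε)] at h6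
    exact h6
  have h7 : (Real.sqrt 2 + ε) * Real.sqrt t
      = Real.sqrt 2 * Real.sqrt t + ε * Real.sqrt t := by ring
  linarith [h1, h2, h3 ▸ h2, h4, h7]
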